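/- Let {c_i}_{i=1}^{N_s} be vectors in a real inner product space H, and let P_V denote orthogonal projection onto a subspace V of dimension N. Then among all N-dimensional subspaces, the sum Σ_i ‖c_i − P_V c_i‖² is minimized by the span of the top N eigenvectors of the operator K(x) = Σ_i (c_i, x) c_i, and the minimal value equals the sum of the eigenvalues of K beyond the N-th (counted with multiplicity, in decreasing order). -/

import Mathlib

open Module Submodule

local notation "⟪" x ", " y "⟫" => @inner ℝ _ _ x y

section aux
variable {m Ns : ℕ}

private lemma pyth (V : Submodule ℝ (EuclideanSpace ℝ (Fin m))) (x : EuclideanSpace ℝ (Fin m)) :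
    ‖x - (orthogonalProjection V x : EuclideanSpace ℝ (Fin m))‖^2
      = ‖x‖^2 - ‖orthogonalProjection V x‖^2 := by
  have h := norm_sq_eq_add_norm_sq_projection x V
  have h2 : (orthogonalProjection Vᗮ x : EuclideanSpace ℝ (Fin m)) = x - orthogonalProjection V x := by
    have := starProjection_add_starProjection_orthogonal (K := V) x
    simp only [starProjection_apply] at this
    linear_combination (norm := module) this
  simp only [Submodule.coe_norm] at h ⊢
  rw [h2] at h
  linarith

private lemma pnorm {V : Submodule ℝ (EuclideanSpace ℝ (Fin m))} {ι : Type*} [Fintype ι]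
    (w : OrthonormalBasis ι ℝ V) (x : EuclideanSpace ℝ (Fin m)) :
    ‖orthogonalProjection V x‖^2 = ∑ j, ⟪x, (w j : EuclideanSpace ℝ (Fin m))⟫^2 := by
  have hy : ∀ y : V, (‖y‖:ℝ)^2 = ∑ j, ⟪(w j : EuclideanSpace ℝ (Fin m)), (y : EuclideanSpace ℝ (Fin m))⟫^2 := by
    intro y
    have := w.sum_inner_mul_inner y y
    rw [← real_inner_self_eq_norm_sq]
    rw [← this]
    congr 1; ext j
    rw [Submodule.coe_inner, Submodule.coe_inner, real_inner_comm]
    ring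
  rw [hy (orthogonalProjection V x)]
  congr 1; ext j
  have h0 := starProjection_inner_eq_zero (K := V) x (w j : EuclideanSpace ℝ (Fin m)) (w j).2
  rw [starProjection_apply] at h0
  have : ⟪(w j : EuclideanSpace ℝ (Fin m)), (orthogonalProjection V x : EuclideanSpace ℝ (Fin m))⟫
      = ⟪x, (w j : EuclideanSpace ℝ (Fin m))⟫ := by
    rw [real_inner_comm] at h0
    rw [inner_sub_right] at h0
    have e1 := real_inner_comm x ((w j : EuclideanSpace ℝ (Fin m)))
    have e2 := real_inner_comm ((orthogonalProjection V x : EuclideanSpace ℝ (Fin m))) ((w j : EuclideanSpace ℝ (Fin m)))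
    linarith
  rw [this]

private lemma proj_err {V : Submodule ℝ (EuclideanSpace ℝ (Fin m))} {ι : Type*} [Fintype ι]
    (w : OrthonormalBasis ι ℝ V) (c : Fin Ns → EuclideanSpace ℝ (Fin m)) :
    ∑ i, ‖c i - (orthogonalProjection V (c i) : EuclideanSpace ℝ (Fin m))‖^2
      = ∑ i, ‖c i‖^2 - ∑ j, ∑ i, ⟪c i, (w j : EuclideanSpace ℝ (Fin m))⟫^2 := by
  rw [Finset.sum_comm]
  rw [← Finset.sum_sub_distrib]
  congr 1; ext i
  rw [pyth, pnorm w]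


private lemma q_eq (c : Fin Ns → EuclideanSpace ℝ (Fin m)) (μ : Fin m → ℝ)
    (v : Fin m → EuclideanSpace ℝ (Fin m))
    (hv : Orthonormal ℝ v) (hsp : ⊤ ≤ span ℝ (Set.range v))
    (heig : ∀ k, ∑ i, ⟪c i, v k⟫ • c i = μ k • v k) (x : EuclideanSpace ℝ (Fin m)) :
    ∑ i, ⟪c i, x⟫^2 = ∑ k, μ k * ⟪v k, x⟫^2 := by
  let b : OrthonormalBasis (Fin m) ℝ (EuclideanSpace ℝ (Fin m)) := OrthonormalBasis.mk hv hsp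
  have hb : ⇑b = v := OrthonormalBasis.coe_mk hv hsp
  have hx : ∑ k, ⟪v k, x⟫ • v k = x := by
    conv_rhs => rw [← b.sum_repr' x]
    simp [hb]
  have h1 : ∀ y : EuclideanSpace ℝ (Fin m), ⟪y, x⟫ = ∑ k, ⟪v k, x⟫ * ⟪y, v k⟫ := by
    intro y
    conv_lhs => rw [← hx]
    rw [inner_sum]
    refine Finset.sum_congr rfl fun k _ => ?_
    rw [real_inner_smul_right]
  have key : ∑ i, ⟪c i, x⟫ • c i = ∑ k, ⟪v k, x⟫ • (μ k • v k) := by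
    calc ∑ i, ⟪c i, x⟫ • c i
        = ∑ i, ∑ k, (⟪v k, x⟫ * ⟪c i, v k⟫) • c i := by
          refine Finset.sum_congr rfl fun i _ => ?_
          rw [← Finset.sum_smul, ← h1]
      _ = ∑ k, ⟪v k, x⟫ • (∑ i, ⟪c i, v k⟫ • c i) := by
          rw [Finset.sum_comm]
          refine Finset.sum_congr rfl fun k _ => ?_
          rw [Finset.smul_sum]
          refine Finset.sum_congr rfl fun i _ => ?_
          rw [smul_smul]
      _ = ∑ k, ⟪v k, x⟫ • (μ k • v k) := by
          refine Finset.sum_congr rfl fun k _ => ?_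
          rw [heig]
  have lhs : ∑ i, ⟪c i, x⟫^2 = ⟪∑ i, ⟪c i, x⟫ • c i, x⟫ := by
    rw [sum_inner]
    refine Finset.sum_congr rfl fun i _ => ?_
    rw [real_inner_smul_left]; ring
  rw [lhs, key, sum_inner]
  refine Finset.sum_congr rfl fun k _ => ?_
  rw [real_inner_smul_left, real_inner_smul_left]; ring

private lemma key_ineq {m N : ℕ} (hN : N ≤ m) (μ : Fin m → ℝ) (hμ : Antitone μ)
    (hμ0 : ∀ k, 0 ≤ μ k) (t : Fin m → ℝ) (ht0 : ∀ k, 0 ≤ t k) (ht1 : ∀ k, t k ≤ 1)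
    (htsum : ∑ k, t k = N) :
    ∑ k, μ k * t k ≤ ∑ k : Fin m, if (k : ℕ) < N then μ k else 0 := by
  set cst : ℝ := if h : N < m then μ ⟨N, h⟩ else 0 with hcst
  have hcst0 : 0 ≤ cst := by
    rw [hcst]; split
    · exact hμ0 _
    · exact le_refl 0
  have hsum2 : ∑ k : Fin m, (if (k : ℕ) < N then (1:ℝ) else 0) = N := by
    rw [Finset.sum_ite, Finset.sum_const, Finset.sum_const_zero, add_zero]
    have hcard : (Finset.univ.filter fun k : Fin m => (k : ℕ) < N).card = N := by
      have hmap : (Finset.univ.filter fun k : Fin m => (k : ℕ) < N)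
          = Finset.map (Fin.castLEEmb hN) Finset.univ := by
        ext k
        simp only [Finset.mem_filter, Finset.mem_univ, true_and, Finset.mem_map,
          Fin.castLEEmb, Function.Embedding.coeFn_mk]
        constructor
        · intro h; exact ⟨⟨(k : ℕ), h⟩, by ext; simp⟩
        · rintro ⟨j, rfl⟩; exact j.isLt
      rw [hmap, Finset.card_map, Finset.card_univ, Fintype.card_fin]
    rw [hcard]; simp
  have main : ∀ k : Fin m, μ k * t k - (if (k : ℕ) < N then μ k else 0)
      ≤ cst * (t k - if (k : ℕ) < N then (1:ℝ) else 0) := by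
    intro k
    by_cases h : (k : ℕ) < N
    · simp only [if_pos h]
      have hk : cst ≤ μ k := by
        rw [hcst]
        split
        · exact hμ (by rw [Fin.le_def]; exact Nat.le_of_lt h)
        · exact hμ0 k
      nlinarith [ht1 k]
    · simp only [if_neg h]
      have hNm : N < m := lt_of_le_of_lt (Nat.le_of_not_lt h) k.isLt
      have hk : μ k ≤ cst := by
        rw [hcst, dif_pos hNm]
        exact hμ (by rw [Fin.le_def]; exact Nat.le_of_not_lt h)
      nlinarith [ht0 k]
  have hs : ∑ k : Fin m, (μ k * t k - if (k : ℕ) < N then μ k else 0)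
      ≤ ∑ k : Fin m, cst * (t k - if (k : ℕ) < N then (1:ℝ) else 0) :=
    Finset.sum_le_sum (fun k _ => main k)
  rw [Finset.sum_sub_distrib] at hs
  have hr : ∑ k : Fin m, cst * (t k - if (k : ℕ) < N then (1:ℝ) else 0) = 0 := by
    rw [← Finset.mul_sum, Finset.sum_sub_distrib, htsum, hsum2, sub_self, mul_zero]
  rw [hr] at hs
  linarith

private lemma filter_eq_map {m N : ℕ} (hN : N ≤ m) :
    Finset.univ.filter (fun k : Fin m => (k : ℕ) < N)
      = Finset.map (Fin.castLEEmb hN) Finset.univ := by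
  ext k
  simp only [Finset.mem_filter, Finset.mem_univ, true_and, Finset.mem_map,
    Fin.castLEEmb, Function.Embedding.coeFn_mk]
  constructor
  · intro h; exact ⟨⟨(k : ℕ), h⟩, by ext; simp⟩
  · rintro ⟨j, rfl⟩; exact j.isLt

end aux

open Module

/-- POD optimality: the span of the top `N` eigenvectors of the snapshot covariance operator
`K x = Σ_i ⟪c_i, x⟫ c_i` minimizes the total squared projection error among all `N`-dimensional
subspaces, and the minimal value is the sum of the eigenvalues beyond the `N`-th. -/
theorem pod_optimality {m Ns N : ℕ} (hN : N ≤ m)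
    (c : Fin Ns → EuclideanSpace ℝ (Fin m))
    (μ : Fin m → ℝ) (v : Fin m → EuclideanSpace ℝ (Fin m))
    (hv : Orthonormal ℝ v) (hμ : Antitone μ)
    -- `(v k, μ k)` are the eigenpairs of the covariance operator `K`, in decreasing order
    (heig : ∀ k, ∑ i, (inner ℝ (c i) (v k) : ℝ) • c i = μ k • v k) :
    (∑ i, ‖c i - (Submodule.orthogonalProjectionOnto
        (Submodule.span ℝ (Set.range fun k : Fin N => v (Fin.castLE hN k))) (c i) :
        EuclideanSpace ℝ (Fin m))‖ ^ 2
      = ∑ k : Fin m, if N ≤ (k : ℕ) then μ k else 0) ∧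
    ∀ V : Submodule ℝ (EuclideanSpace ℝ (Fin m)), finrank ℝ V = N →
      (∑ k : Fin m, if N ≤ (k : ℕ) then μ k else 0) ≤
        ∑ i, ‖c i - (Submodule.orthogonalProjectionOnto V (c i) : EuclideanSpace ℝ (Fin m))‖ ^ 2 := by
  classical
  have hsp : ⊤ ≤ span ℝ (Set.range v) := by
    refine (hv.linearIndependent.span_eq_top_of_card_eq_finrank' ?_).ge
    simp
  have hite : ∀ j k, ⟪v j, v k⟫ = if j = k then (1:ℝ) else 0 := orthonormal_iff_ite.mp hv
  have μ_eq : ∀ k, ∑ i, ⟪c i, v k⟫^2 = μ k := by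
    intro k
    rw [q_eq c μ v hv hsp heig (v k)]
    rw [Finset.sum_eq_single k]
    · rw [hite k k, if_pos rfl]; ring
    · intro j _ hj; rw [hite j k, if_neg hj]; ring
    · intro h; exact absurd (Finset.mem_univ k) h
  have hμ0 : ∀ k, 0 ≤ μ k := by
    intro k
    rw [← μ_eq k]
    exact Finset.sum_nonneg fun i _ => sq_nonneg _
  -- Parseval
  let b : OrthonormalBasis (Fin m) ℝ (EuclideanSpace ℝ (Fin m)) := OrthonormalBasis.mk hv hsp
  have hb : ⇑b = v := OrthonormalBasis.coe_mk hv hsp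
  have hpar : ∀ x : EuclideanSpace ℝ (Fin m), ‖x‖^2 = ∑ k, ⟪v k, x⟫^2 := by
    intro x
    have h := b.sum_inner_mul_inner x x
    rw [← real_inner_self_eq_norm_sq, ← h]
    refine Finset.sum_congr rfl fun k _ => ?_
    rw [hb, real_inner_comm]; ring
  have htot : ∑ i, ‖c i‖^2 = ∑ k, μ k := by
    calc ∑ i, ‖c i‖^2 = ∑ i, ∑ k, ⟪v k, c i⟫^2 :=
          Finset.sum_congr rfl fun i _ => hpar (c i)
      _ = ∑ k, ∑ i, ⟪c i, v k⟫^2 := by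
          rw [Finset.sum_comm]
          exact Finset.sum_congr rfl fun k _ => Finset.sum_congr rfl fun i _ => by
            rw [real_inner_comm]
      _ = ∑ k, μ k := Finset.sum_congr rfl fun k _ => μ_eq k
  have htarget : ∑ k : Fin m, (if N ≤ (k : ℕ) then μ k else 0)
      = ∑ k, μ k - ∑ k : Fin m, (if (k : ℕ) < N then μ k else 0) := by
    rw [← Finset.sum_sub_distrib]
    refine Finset.sum_congr rfl fun k _ => ?_
    by_cases h : (k : ℕ) < N
    · rw [if_pos h, if_neg (by omega), sub_self]
    · rw [if_neg h, if_pos (by omega), sub_zero]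
  set s : Finset (Fin m) := Finset.map (Fin.castLEEmb hN) Finset.univ with hs
  have hsumfil : ∀ f : Fin m → ℝ, ∑ k ∈ s, f k = ∑ k : Fin m, if (k : ℕ) < N then f k else 0 := by
    intro f
    rw [hs, ← filter_eq_map hN, Finset.sum_filter]
  constructor
  · -- the optimal value
    have hset : ((s.image v : Finset (EuclideanSpace ℝ (Fin m))) : Set (EuclideanSpace ℝ (Fin m)))
        = Set.range (fun k : Fin N => v (Fin.castLE hN k)) := by
      rw [Finset.coe_image, hs, Finset.coe_map, Finset.coe_univ, Set.image_univ,
        ← Set.range_comp]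
      rfl
    have hV0 : Submodule.span ℝ (Set.range fun k : Fin N => v (Fin.castLE hN k))
        = Submodule.span ℝ ((s.image v : Finset (EuclideanSpace ℝ (Fin m)))
            : Set (EuclideanSpace ℝ (Fin m))) := by rw [hset]
    rw [hV0]
    let w0 := OrthonormalBasis.span hv s
    rw [proj_err w0 c, htot]
    have hterm : ∑ j : {x // x ∈ s}, ∑ i, ⟪c i, (w0 j : EuclideanSpace ℝ (Fin m))⟫^2
        = ∑ k : Fin m, if (k : ℕ) < N then μ k else 0 := by
      calc ∑ j : {x // x ∈ s}, ∑ i, ⟪c i, (w0 j : EuclideanSpace ℝ (Fin m))⟫^2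
          = ∑ j : {x // x ∈ s}, μ (j : Fin m) := by
            refine Finset.sum_congr rfl fun j _ => ?_
            rw [show (w0 j : EuclideanSpace ℝ (Fin m)) = v (j : Fin m) from
              OrthonormalBasis.span_apply hv s j]
            exact μ_eq _
        _ = ∑ k ∈ s, μ k := Finset.sum_coe_sort s μ
        _ = ∑ k : Fin m, if (k : ℕ) < N then μ k else 0 := hsumfil μ
    rw [hterm, htarget]
  · -- optimality
    intro V hVr
    let w := stdOrthonormalBasis ℝ V
    rw [proj_err w c, htot]
    set t : Fin m → ℝ := fun k => ∑ j, ⟪v k, (w j : EuclideanSpace ℝ (Fin m))⟫^2 with htdef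
    have hterm : ∑ j, ∑ i, ⟪c i, (w j : EuclideanSpace ℝ (Fin m))⟫^2 = ∑ k, μ k * t k := by
      calc ∑ j, ∑ i, ⟪c i, (w j : EuclideanSpace ℝ (Fin m))⟫^2
          = ∑ j, ∑ k, μ k * ⟪v k, (w j : EuclideanSpace ℝ (Fin m))⟫^2 :=
            Finset.sum_congr rfl fun j _ => q_eq c μ v hv hsp heig _
        _ = ∑ k, μ k * t k := by
            rw [Finset.sum_comm]
            refine Finset.sum_congr rfl fun k _ => ?_
            rw [htdef, Finset.mul_sum]
    rw [hterm]
    have hwcoe : Orthonormal ℝ (fun j => (w j : EuclideanSpace ℝ (Fin m))) :=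
      V.subtypeₗᵢ.orthonormal_comp_iff.mpr w.orthonormal
    have ht0 : ∀ k, 0 ≤ t k := fun k => Finset.sum_nonneg fun j _ => sq_nonneg _
    have ht1 : ∀ k, t k ≤ 1 := by
      intro k
      have hb2 := hwcoe.sum_inner_products_le (v k) (s := Finset.univ)
      have hnv : ‖v k‖ = 1 := hv.1 k
      rw [hnv] at hb2
      calc t k = ∑ j, ‖⟪(w j : EuclideanSpace ℝ (Fin m)), v k⟫‖^2 := by
            refine Finset.sum_congr rfl fun j _ => ?_
            rw [Real.norm_eq_abs, sq_abs, real_inner_comm]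
        _ ≤ 1^2 := hb2
        _ = 1 := one_pow 2
    have htsum : ∑ k, t k = (N : ℝ) := by
      calc ∑ k, t k = ∑ j, ∑ k, ⟪v k, (w j : EuclideanSpace ℝ (Fin m))⟫^2 := Finset.sum_comm
        _ = ∑ j : Fin (finrank ℝ V), (1:ℝ) := by
            refine Finset.sum_congr rfl fun j _ => ?_
            rw [← hpar, Submodule.norm_coe, w.orthonormal.1 j, one_pow]
        _ = (N : ℝ) := by rw [Finset.sum_const, Finset.card_univ, Fintype.card_fin, hVr]; simp
    have hk := key_ineq hN μ hμ hμ0 t ht0 ht1 htsum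
    rw [htarget]
    linarith
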